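/- Let ≼ be an inclusion-monotone preorder on Finset α and let C be a consistency predicate with C ∅. Then for every finite G : Finset α: G has a nonempty subset repair (inclusion-maximal consistent subset) if and only if G has a nonempty ≼-preferred repair. -/
import Mathlib


/-- The strict part of a preference relation on finite databases. -/
def strictPart {α : Type*} [DecidableEq α] (r : Finset α → Finset α → Prop)
    (H H' : Finset α) : Prop :=
  r H H' ∧ ¬ r H' H

/-- `H` is a `r`-preferred repair of `G` with respect to consistency predicate `C`. -/
def PreferredRepair {α : Type*} [DecidableEq α] (r : Finset α → Finset α → Prop)
    (C : Finset α → Prop) (G H : Finset α) : Prop :=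
  C H ∧ H ⊆ G ∧ ¬ ∃ H'', H'' ⊆ G ∧ H'' ≠ H ∧ C H'' ∧ strictPart r H H''

/-- `H` is a subset repair of `G`: an inclusion-maximal consistent subset of `G`. -/
def SubsetRepair {α : Type*} [DecidableEq α] (C : Finset α → Prop)
    (G H : Finset α) : Prop :=
  C H ∧ H ⊆ G ∧ ¬ ∃ H'', C H'' ∧ H ⊂ H'' ∧ H'' ⊆ G

/-- A relation on finite sets is inclusion-monotone if strict inclusion implies
strict preference. -/
def InclMonotone {α : Type*} [DecidableEq α] (r : Finset α → Finset α → Prop) : Prop :=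
  ∀ H H' : Finset α, H ⊂ H' → strictPart r H H'

lemma exists_maximal_finset {β : Type*} (s : β → β → Prop)
    (htr : ∀ a b c, s a b → s b c → s a c) (hirr : ∀ a, ¬ s a a)
    (t : Finset β) (hne : t.Nonempty) : ∃ m ∈ t, ∀ x ∈ t, ¬ s m x := by
  classical
  induction t using Finset.induction_on with
  | empty => exact absurd hne (by simp)
  | @insert a u ha ih =>
    by_cases hu : u.Nonempty
    · obtain ⟨m, hm, hmax⟩ := ih hu
      by_cases hma : s m a
      · refine ⟨a, Finset.mem_insert_self _ _, ?_⟩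
        intro x hx hax
        rcases Finset.mem_insert.mp hx with rfl | hx
        · exact hirr _ hax
        · exact hmax x hx (htr _ _ _ hma hax)
      · refine ⟨m, Finset.mem_insert_of_mem hm, ?_⟩
        intro x hx
        rcases Finset.mem_insert.mp hx with rfl | hx
        · exact hma
        · exact hmax x hx
    · refine ⟨a, Finset.mem_insert_self _ _, ?_⟩
      intro x hx
      rcases Finset.mem_insert.mp hx with rfl | hx
      · exact hirr _
      · exact absurd ⟨x, hx⟩ hu

theorem nonempty_subset_repair_iff_nonempty_preferred_repair
    {α : Type*} [DecidableEq α] (r : Finset α → Finset α → Prop)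
    (hrefl : ∀ H, r H H)
    (htrans : ∀ H₁ H₂ H₃, r H₁ H₂ → r H₂ H₃ → r H₁ H₃)
    (hmono : InclMonotone r)
    (C : Finset α → Prop) (hC : C ∅) (G : Finset α) :
    (∃ H, SubsetRepair C G H ∧ H ≠ ∅) ↔ (∃ H, PreferredRepair r C G H ∧ H ≠ ∅) := by
  classical
  constructor
  · rintro ⟨H, ⟨hCH, hHG, -⟩, hHne⟩
    -- take a strictPart-maximal element of the consistent subsets of G
    have hfin : {H' : Finset α | H' ⊆ G ∧ C H'}.Finite := by
      apply (G.powerset.finite_toSet).subset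
      intro x hx
      simpa [Finset.mem_powerset] using hx.1
    set t := hfin.toFinset with ht
    have htne : t.Nonempty := ⟨H, by simp [ht, hfin.mem_toFinset, hHG, hCH]⟩
    have htr : ∀ a b c, strictPart r a b → strictPart r b c → strictPart r a c := by
      rintro a b c ⟨hab, hba⟩ ⟨hbc, hcb⟩
      exact ⟨htrans _ _ _ hab hbc, fun hca => hcb (htrans _ _ _ hca hab)⟩
    have hirr : ∀ a, ¬ strictPart r a a := fun a ⟨h1, h2⟩ => h2 h1
    obtain ⟨m, hm, hmax⟩ := exists_maximal_finset (strictPart r) htr hirr t htne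
    rw [ht, hfin.mem_toFinset] at hm
    refine ⟨m, ⟨hm.2, hm.1, ?_⟩, ?_⟩
    · rintro ⟨H'', hG, -, hC'', hs⟩
      exact hmax H'' (by simp [ht, hfin.mem_toFinset, hG, hC'']) hs
    · rintro rfl
      have : (∅ : Finset α) ⊂ H := Finset.ssubset_iff_subset_ne.mpr ⟨Finset.empty_subset _, (Ne.symm hHne)⟩
      exact hmax H (by simp [ht, hfin.mem_toFinset, hHG, hCH]) (hmono _ _ this)
  · rintro ⟨H, ⟨hCH, hHG, hpref⟩, hHne⟩
    refine ⟨H, ⟨hCH, hHG, ?_⟩, hHne⟩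
    rintro ⟨H'', hC'', hss, hG⟩
    exact hpref ⟨H'', hG, (hss.ne).symm, hC'', hmono _ _ hss⟩
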